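/- arXiv:2001.01694 — 3 statements merged into one kernel-verified Lean document; each statement's English description precedes it below -/
import Mathlib

section
/- Let M be the set of invariant probability measures of a dynamical system on a locally compact metric space X, let φ : X → ℝ be continuous with β(φ) := sup_{μ ∈ M} ∫ φ dμ finite, and let ψ : X → ℝ be a positive continuous function vanishing at infinity. Define β_∞(φ) as the supremum over sequences (μₙ) in M converging vaguely to the zero measure of limsup ∫ φ dμₙ (in ℝ ∪ {−∞}), assuming at least one such sequence exists. Then β_∞(φ) = lim_{t → +∞} β(φ − tψ). -/
open MeasureTheory Filter Topology

/-- `β_∞(φ) = lim_{t → ∞} β(φ - tψ)` for a positive test function `ψ`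
vanishing at infinity (the limit taken in `EReal`, as it may be `-∞`). -/
theorem stmt_3 {X : Type*} [MetricSpace X] [LocallyCompactSpace X]
    [MeasurableSpace X] [BorelSpace X]
    (M : Set (Measure X)) (hMne : M.Nonempty)
    (hMprob : ∀ μ ∈ M, IsProbabilityMeasure μ)
    (φ ψ : X → ℝ) (hφ : Continuous φ) (hψ : Continuous ψ)
    (hψpos : ∀ x, 0 < ψ x)
    (hψ0 : ∀ ε > (0:ℝ), ∃ K : Set X, IsCompact K ∧ ∀ x ∉ K, |ψ x| < ε)
    (hint : ∀ μ ∈ M, Integrable φ μ ∧ Integrable ψ μ)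
    (β : ℝ) (hβ : IsLUB {r : ℝ | ∃ μ ∈ M, r = ∫ x, φ x ∂μ} β)
    (hex : ∃ s : ℕ → Measure X, (∀ n, s n ∈ M) ∧ ∀ f : X → ℝ, Continuous f →
      HasCompactSupport f → Tendsto (fun n => ∫ x, f x ∂(s n)) atTop (nhds 0))
    (βinf : EReal)
    (hβinf : βinf = sSup {r : EReal | ∃ s : ℕ → Measure X, (∀ n, s n ∈ M) ∧
      (∀ f : X → ℝ, Continuous f → HasCompactSupport f →
        Tendsto (fun n => ∫ x, f x ∂(s n)) atTop (nhds 0)) ∧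
      r = Filter.limsup (fun n => ((∫ x, φ x ∂(s n) : ℝ) : EReal)) atTop}) :
    Tendsto (fun t : ℝ =>
      ((sSup {r : ℝ | ∃ μ ∈ M, r = ∫ x, (φ x - t * ψ x) ∂μ} : ℝ) : EReal))
      atTop (nhds βinf) := by
  classical
  set S : ℝ → Set ℝ := fun t => {r : ℝ | ∃ μ ∈ M, r = ∫ x, (φ x - t * ψ x) ∂μ} with hSdef
  -- ψ is bounded above
  obtain ⟨K1, hK1, hK1ψ⟩ := hψ0 1 one_pos
  obtain ⟨C0, hC0⟩ := (hK1.image hψ).bddAbove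
  set C : ℝ := max C0 1 with hCdef
  have hC : ∀ x, ψ x ≤ C := by
    intro x
    by_cases hx : x ∈ K1
    · exact le_trans (hC0 (Set.mem_image_of_mem ψ hx)) (le_max_left _ _)
    · exact le_trans (le_of_lt (lt_of_le_of_lt (le_abs_self _) (hK1ψ x hx))) (le_max_right _ _)
  have hβub : ∀ μ ∈ M, ∫ x, φ x ∂μ ≤ β := fun μ hμ => hβ.1 ⟨μ, hμ, rfl⟩
  have hψnn : ∀ μ ∈ M, 0 ≤ ∫ x, ψ x ∂μ := fun μ hμ => integral_nonneg fun x => (hψpos x).le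
  have hψC : ∀ μ ∈ M, ∫ x, ψ x ∂μ ≤ C := by
    intro μ hμ
    have := hMprob μ hμ
    calc ∫ x, ψ x ∂μ ≤ ∫ _, C ∂μ := integral_mono (hint μ hμ).2 (integrable_const C) hC
      _ = C := by simp
  have hsplit : ∀ (t : ℝ), ∀ μ ∈ M,
      ∫ x, (φ x - t * ψ x) ∂μ = ∫ x, φ x ∂μ - t * ∫ x, ψ x ∂μ := by
    intro t μ hμ
    rw [integral_sub (hint μ hμ).1 (((hint μ hμ).2).const_mul t), integral_const_mul]
  have hSne : ∀ t, (S t).Nonempty := by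
    intro t
    obtain ⟨μ, hμ⟩ := hMne
    exact ⟨_, μ, hμ, rfl⟩
  have hSbdd : ∀ t, BddAbove (S t) := by
    intro t
    refine ⟨β + |t| * C, ?_⟩
    rintro r ⟨μ, hμ, rfl⟩
    rw [hsplit t μ hμ]
    have h1 := hβub μ hμ
    have h2 := hψnn μ hμ
    have h3 := hψC μ hμ
    have h4 : -t * ∫ x, ψ x ∂μ ≤ |t| * C := by
      calc -t * ∫ x, ψ x ∂μ ≤ |t| * ∫ x, ψ x ∂μ :=
            mul_le_mul_of_nonneg_right (neg_le_abs t) h2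
        _ ≤ |t| * C := mul_le_mul_of_nonneg_left h3 (abs_nonneg t)
    linarith
  have hg_anti : Antitone fun t => sSup (S t) := by
    intro t t' h
    refine csSup_le (hSne t') ?_
    rintro r ⟨μ, hμ, rfl⟩
    refine le_trans ?_ (le_csSup (hSbdd t) ⟨μ, hμ, rfl⟩)
    rw [hsplit t μ hμ, hsplit t' μ hμ]
    have := mul_le_mul_of_nonneg_right h (hψnn μ hμ)
    linarith
  -- ∫ψ → 0 along vague-to-zero sequences in M
  have hψ_tendsto : ∀ s : ℕ → Measure X, (∀ n, s n ∈ M) →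
      (∀ f : X → ℝ, Continuous f → HasCompactSupport f →
        Tendsto (fun n => ∫ x, f x ∂(s n)) atTop (𝓝 0)) →
      Tendsto (fun n => ∫ x, ψ x ∂(s n)) atTop (𝓝 0) := by
    intro s hsM hsv
    rw [tendsto_order]
    constructor
    · intro a ha
      exact Eventually.of_forall fun n => lt_of_lt_of_le ha (hψnn _ (hsM n))
    · intro a ha
      obtain ⟨K, hK, hKψ⟩ := hψ0 (a/2) (by linarith)
      set gf : X → ℝ := fun x => max (ψ x - a/2) 0 with hgf
      have hgfc : Continuous gf := (hψ.sub continuous_const).max continuous_const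
      have hgfs : HasCompactSupport gf := by
        refine HasCompactSupport.intro hK fun x hx => ?_
        have h1 := hKψ x hx
        have h2 : ψ x < a/2 := lt_of_le_of_lt (le_abs_self _) h1
        simp only [hgf]
        exact max_eq_right (by linarith)
      have hle : ∀ x, ψ x ≤ gf x + a/2 := by
        intro x
        have := le_max_left (ψ x - a/2) 0
        simp only [hgf]
        linarith
      have h1 : ∀ n, ∫ x, ψ x ∂(s n) ≤ (∫ x, gf x ∂(s n)) + a/2 := by
        intro n
        have := hMprob _ (hsM n)
        have hgint : Integrable gf (s n) := hgfc.integrable_of_hasCompactSupport hgfs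
        calc ∫ x, ψ x ∂(s n) ≤ ∫ x, (gf x + a/2) ∂(s n) :=
              integral_mono (hint _ (hsM n)).2 (hgint.add (integrable_const _)) hle
          _ = (∫ x, gf x ∂(s n)) + a/2 := by
              rw [integral_add hgint (integrable_const _), integral_const]
              simp
      have h2 := hsv gf hgfc hgfs
      have h3 : ∀ᶠ n in atTop, ∫ x, gf x ∂(s n) < a/2 :=
        h2.eventually_lt_const (by linarith)
      filter_upwards [h3] with n hn
      exact lt_of_le_of_lt (h1 n) (by linarith)
  -- upper bound: any vague limsup is below every sSup (S t)
  have hlimsup_le : ∀ s : ℕ → Measure X, (∀ n, s n ∈ M) →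
      (∀ f : X → ℝ, Continuous f → HasCompactSupport f →
        Tendsto (fun n => ∫ x, f x ∂(s n)) atTop (𝓝 0)) →
      ∀ t : ℝ, limsup (fun n => ((∫ x, φ x ∂(s n) : ℝ) : EReal)) atTop
        ≤ ((sSup (S t) : ℝ) : EReal) := by
    intro s hsM hsv t
    have h0 : Tendsto (fun n => sSup (S t) + t * ∫ x, ψ x ∂(s n)) atTop (𝓝 (sSup (S t))) := by
      have h := (hψ_tendsto s hsM hsv).const_mul t
      simpa using tendsto_const_nhds.add h
    have hE : Tendsto (fun n => ((sSup (S t) + t * ∫ x, ψ x ∂(s n) : ℝ) : EReal)) atTop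
        (𝓝 ((sSup (S t) : ℝ) : EReal)) := (continuous_coe_real_ereal.tendsto _).comp h0
    calc limsup (fun n => ((∫ x, φ x ∂(s n) : ℝ) : EReal)) atTop
        ≤ limsup (fun n => ((sSup (S t) + t * ∫ x, ψ x ∂(s n) : ℝ) : EReal)) atTop := by
          refine limsup_le_limsup (Eventually.of_forall fun n => ?_)
          refine EReal.coe_le_coe_iff.2 ?_
          have hmem : ∫ x, (φ x - t * ψ x) ∂(s n) ≤ sSup (S t) :=
            le_csSup (hSbdd t) ⟨s n, hsM n, rfl⟩
          rw [hsplit t _ (hsM n)] at hmem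
          linarith
      _ = ((sSup (S t) : ℝ) : EReal) := hE.limsup_eq
  -- the limit is the infimum
  have hG_anti : Antitone (fun t : ℝ => ((sSup (S t) : ℝ) : EReal)) :=
    fun t t' h => EReal.coe_le_coe_iff.2 (hg_anti h)
  have htend := tendsto_atTop_iInf hG_anti
  set L : EReal := ⨅ t : ℝ, ((sSup (S t) : ℝ) : EReal) with hLdef
  suffices hLβ : βinf = L by rw [hLβ]; exact htend
  apply le_antisymm
  · -- βinf ≤ L
    rw [hβinf]
    refine sSup_le ?_
    rintro r ⟨s, hsM, hsv, rfl⟩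
    exact le_iInf fun t => hlimsup_le s hsM hsv t
  · -- L ≤ βinf
    by_cases hbot : L = ⊥
    · rw [hbot]; exact bot_le
    have htop : L ≠ ⊤ := by
      intro h
      have h0 : L ≤ ((sSup (S 0) : ℝ) : EReal) := iInf_le _ 0
      rw [h] at h0
      exact (EReal.coe_ne_top _) (top_le_iff.1 h0)
    set l : ℝ := L.toReal with hldef
    have hLl : (l : EReal) = L := EReal.coe_toReal htop hbot
    have hlg : ∀ t : ℝ, l ≤ sSup (S t) := by
      intro t
      have := iInf_le (fun t : ℝ => ((sSup (S t) : ℝ) : EReal)) t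
      rw [← hLdef, ← hLl] at this
      exact EReal.coe_le_coe_iff.1 this
    have hlβ : l ≤ β := le_trans (hlg 0) (csSup_le (hSne 0) (by
      rintro r ⟨μ, hμ, rfl⟩
      rw [hsplit 0 μ hμ]
      simpa using hβub μ hμ))
    -- choose near-optimal sequence
    have hchoice : ∀ n : ℕ, ∃ μ, μ ∈ M ∧
        sSup (S ((n : ℝ) + 1)) - 1/((n : ℝ)+1) < ∫ x, (φ x - ((n : ℝ)+1) * ψ x) ∂μ := by
      intro n
      have hpos : (0:ℝ) < 1/((n : ℝ)+1) := by positivity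
      obtain ⟨r, ⟨μ, hμ, rfl⟩, hr⟩ :=
        exists_lt_of_lt_csSup (hSne ((n : ℝ)+1))
          (show sSup (S ((n : ℝ)+1)) - 1/((n : ℝ)+1) < sSup (S ((n : ℝ)+1)) by linarith)
      exact ⟨μ, hμ, hr⟩
    choose s hsM hs using hchoice
    have hkey : ∀ n : ℕ, ((n : ℝ)+1) * ∫ x, ψ x ∂(s n) ≤ β - l + 1 := by
      intro n
      have h1 := hs n
      have h2 := hsplit ((n : ℝ)+1) (s n) (hsM n)
      have h3 := hβub (s n) (hsM n)
      have h4 := hlg ((n : ℝ)+1)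
      have h5 : 1/((n : ℝ)+1) ≤ 1 := by
        rw [div_le_one (by positivity)]
        linarith [Nat.cast_nonneg (α := ℝ) n]
      linarith
    have hψs : Tendsto (fun n => ∫ x, ψ x ∂(s n)) atTop (𝓝 0) := by
      have hD : Tendsto (fun n : ℕ => (β - l + 1) * (1/((n : ℝ)+1))) atTop (𝓝 0) := by
        simpa using tendsto_one_div_add_atTop_nhds_zero_nat.const_mul (β - l + 1)
      refine squeeze_zero (fun n => hψnn _ (hsM n)) (fun n => ?_) hD
      have h1 := hkey n
      have h2 : (0:ℝ) < (n : ℝ)+1 := by positivity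
      rw [mul_one_div, le_div_iff₀ h2, mul_comm]
      exact h1
    have hvague : ∀ f : X → ℝ, Continuous f → HasCompactSupport f →
        Tendsto (fun n => ∫ x, f x ∂(s n)) atTop (𝓝 0) := by
      intro f hf hfc
      rcases (tsupport f).eq_empty_or_nonempty with hts | hts
      · have hf0 : ∀ x, f x = 0 := fun x =>
          image_eq_zero_of_notMem_tsupport (by rw [hts]; exact Set.notMem_empty x)
        have : (fun n => ∫ x, f x ∂(s n)) = fun _ => 0 := by
          funext n; simp [hf0]
        rw [this]
        exact tendsto_const_nhds
      · obtain ⟨x0, hx0, hmin⟩ := hfc.exists_isMinOn hts hψ.continuousOn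
        set c : ℝ := ψ x0 with hcdef
        have hc : 0 < c := hψpos x0
        obtain ⟨x1, hx1, hmax⟩ := hfc.exists_isMaxOn hts (continuous_abs.comp hf).continuousOn
        have hfb : ∀ x, |f x| ≤ |f x1| := by
          intro x
          by_cases hx : x ∈ tsupport f
          · exact hmax hx
          · rw [image_eq_zero_of_notMem_tsupport hx]
            simp [abs_nonneg]
        have hpt : ∀ x, |f x| ≤ (|f x1|/c) * ψ x := by
          intro x
          by_cases hx : x ∈ tsupport f
          · have h1 : c ≤ ψ x := hmin hx
            have h2 : (|f x1|/c) * c ≤ (|f x1|/c) * ψ x :=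
              mul_le_mul_of_nonneg_left h1 (by positivity)
            rw [div_mul_cancel₀ _ (ne_of_gt hc)] at h2
            exact le_trans (hfb x) h2
          · rw [image_eq_zero_of_notMem_tsupport hx]
            simp only [abs_zero]
            exact mul_nonneg (div_nonneg (abs_nonneg _) hc.le) (hψpos x).le
        have hbound : ∀ n, ‖∫ x, f x ∂(s n)‖ ≤ (|f x1|/c) * ∫ x, ψ x ∂(s n) := by
          intro n
          have := hMprob _ (hsM n)
          have hfint : Integrable f (s n) := hf.integrable_of_hasCompactSupport hfc
          calc ‖∫ x, f x ∂(s n)‖ ≤ ∫ x, ‖f x‖ ∂(s n) := norm_integral_le_integral_norm f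
            _ ≤ ∫ x, (|f x1|/c) * ψ x ∂(s n) :=
                integral_mono hfint.norm (((hint _ (hsM n)).2).const_mul _) hpt
            _ = (|f x1|/c) * ∫ x, ψ x ∂(s n) := integral_const_mul _ _
        refine squeeze_zero_norm hbound ?_
        simpa using hψs.const_mul (|f x1|/c)
    have hlow : ∀ n : ℕ, l - 1/((n : ℝ)+1) ≤ ∫ x, φ x ∂(s n) := by
      intro n
      have h1 := hs n
      have h2 := hsplit ((n : ℝ)+1) (s n) (hsM n)
      have h4 := hlg ((n : ℝ)+1)
      have h6 : 0 ≤ ((n : ℝ)+1) * ∫ x, ψ x ∂(s n) :=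
        mul_nonneg (by positivity) (hψnn _ (hsM n))
      linarith
    have htl : Tendsto (fun n : ℕ => ((l - 1/((n : ℝ)+1) : ℝ) : EReal)) atTop
        (𝓝 ((l : ℝ) : EReal)) := by
      refine (continuous_coe_real_ereal.tendsto _).comp ?_
      simpa using (tendsto_const_nhds (x := l)).sub tendsto_one_div_add_atTop_nhds_zero_nat
    have hlimsup_ge : (l : EReal) ≤ limsup (fun n => ((∫ x, φ x ∂(s n) : ℝ) : EReal)) atTop := by
      calc (l : EReal) = limsup (fun n : ℕ => ((l - 1/((n : ℝ)+1) : ℝ) : EReal)) atTop :=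
            htl.limsup_eq.symm
        _ ≤ limsup (fun n => ((∫ x, φ x ∂(s n) : ℝ) : EReal)) atTop :=
            limsup_le_limsup (Eventually.of_forall fun n => EReal.coe_le_coe_iff.2 (hlow n))
    rw [← hLl, hβinf]
    exact le_trans hlimsup_ge (le_sSup ⟨s, hsM, hvague, rfl⟩)
end

section
/- Suppose M is a set of probability measures on a locally compact metric space X, φ : X → ℝ is bounded above and continuous, and suppose the following compactness-type inequality holds: for every sequence (μₙ) in M converging vaguely to a sub-probability measure μ with μ = λν for some λ ∈ [0,1] and ν ∈ M (or μ = 0), one has limsup ∫ φ dμₙ ≤ ∫ φ dμ + (1 − μ(X))·β_∞(φ). If β_∞(φ) < β(φ) and M is sequentially compact in the vague topology in this extended sense, then there exists m ∈ M with ∫ φ dm = β(φ). -/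
open MeasureTheory Filter Topology

/-- if `β_∞(φ) < β(φ)` and the escape-of-mass inequality holds along
vaguely convergent sequences, together with vague sequential compactness with limits
of the form `λ • ν` with `ν ∈ M` (or zero), then `φ` has a maximizing measure. -/
theorem stmt_5 {X : Type*} [MetricSpace X] [LocallyCompactSpace X]
    [MeasurableSpace X] [BorelSpace X]
    (M : Set (Measure X)) (hMne : M.Nonempty)
    (hMprob : ∀ μ ∈ M, IsProbabilityMeasure μ)
    (φ : X → ℝ) (hφ : Continuous φ) (hbdd : ∃ C, ∀ x, φ x ≤ C)
    (β : ℝ) (hβ : IsLUB {r : ℝ | ∃ μ ∈ M, r = ∫ x, φ x ∂μ} β)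
    (βinf : EReal) (hlt : βinf < (β : EReal))
    (hineq : ∀ s : ℕ → Measure X, (∀ n, s n ∈ M) → ∀ μ : Measure X,
      μ Set.univ ≤ 1 →
      (∀ f : X → ℝ, Continuous f → HasCompactSupport f →
        Tendsto (fun n => ∫ x, f x ∂(s n)) atTop (nhds (∫ x, f x ∂μ))) →
      Filter.limsup (fun n => ((∫ x, φ x ∂(s n) : ℝ) : EReal)) atTop ≤
        ((∫ x, φ x ∂μ : ℝ) : EReal) +
          (((1 : ℝ) - (μ Set.univ).toReal : ℝ) : EReal) * βinf)
    (hcpt : ∀ s : ℕ → Measure X, (∀ n, s n ∈ M) → ∃ k : ℕ → ℕ, StrictMono k ∧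
      ∃ μ : Measure X, μ Set.univ ≤ 1 ∧
        (μ = 0 ∨ ∃ l : ℝ, 0 ≤ l ∧ l ≤ 1 ∧ ∃ ν ∈ M, μ = (ENNReal.ofReal l) • ν) ∧
        (∀ f : X → ℝ, Continuous f → HasCompactSupport f →
          Tendsto (fun n => ∫ x, f x ∂(s (k n))) atTop (nhds (∫ x, f x ∂μ)))) :
    ∃ m ∈ M, ∫ x, φ x ∂m = β := by
  classical
  -- upper bound property
  have hub : ∀ μ ∈ M, ∫ x, φ x ∂μ ≤ β := fun μ hμ => hβ.1 ⟨μ, hμ, rfl⟩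
  -- a maximizing sequence
  have hseq : ∀ n : ℕ, ∃ μ ∈ M, β - 1/(n+1) < ∫ x, φ x ∂μ := by
    intro n
    have h1 : β - 1/(n+1) < β := by
      have : (0:ℝ) < 1/(n+1) := by positivity
      linarith
    obtain ⟨r, hr, hr1, -⟩ := hβ.exists_between h1
    obtain ⟨μ, hμ, rfl⟩ := hr
    exact ⟨μ, hμ, hr1⟩
  choose s hsM hslt using hseq
  have htend : Tendsto (fun n => ∫ x, φ x ∂(s n)) atTop (nhds β) := by
    have h1 : Tendsto (fun n : ℕ => β - 1/(n+1)) atTop (nhds β) := by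
      have h2 : Tendsto (fun n : ℕ => 1/((n:ℝ)+1)) atTop (nhds 0) :=
        tendsto_one_div_add_atTop_nhds_zero_nat
      simpa using tendsto_const_nhds.sub h2
    exact tendsto_of_tendsto_of_tendsto_of_le_of_le h1 tendsto_const_nhds
      (fun n => (hslt n).le) (fun n => hub _ (hsM n))
  obtain ⟨k, hk, μ, hμ1, hμform, hμconv⟩ := hcpt s hsM
  have htend' : Tendsto (fun n => ∫ x, φ x ∂(s (k n))) atTop (nhds β) :=
    htend.comp hk.tendsto_atTop
  have hlimsup : Filter.limsup (fun n => ((∫ x, φ x ∂(s (k n)) : ℝ) : EReal)) atTop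
      = (β : EReal) :=
    Tendsto.limsup_eq ((continuous_coe_real_ereal.tendsto β).comp htend')
  have hkey := hineq (fun n => s (k n)) (fun n => hsM (k n)) μ hμ1 hμconv
  rw [hlimsup] at hkey
  rcases hμform with h0 | ⟨l, hl0, hl1, ν, hν, rfl⟩
  · exfalso
    rw [h0] at hkey
    simp only [integral_zero_measure, Measure.coe_zero, Pi.zero_apply,
      ENNReal.toReal_zero, sub_zero, EReal.coe_zero, EReal.coe_one, one_mul,
      zero_add] at hkey
    exact absurd (hkey.trans_lt hlt) (lt_irrefl _)
  · -- compute mass and integral of `l • ν`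
    haveI := hMprob ν hν
    have hmass : ((ENNReal.ofReal l • ν : Measure X) Set.univ).toReal = l := by
      simp [Measure.smul_apply, measure_univ, ENNReal.toReal_ofReal hl0]
    have hint : ∫ x, φ x ∂(ENNReal.ofReal l • ν : Measure X) = l * ∫ x, φ x ∂ν := by
      rw [integral_smul_measure, ENNReal.toReal_ofReal hl0, smul_eq_mul]
    rw [hmass, hint] at hkey
    obtain ⟨b, hb1, hb2⟩ := EReal.exists_between_coe_real hlt
    have hmono : (((1:ℝ) - l : ℝ) : EReal) * βinf ≤ (((1:ℝ) - l : ℝ) : EReal) * (b:EReal) := by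
      apply mul_le_mul_of_nonneg_left hb1.le
      exact_mod_cast (by linarith : (0:ℝ) ≤ 1 - l)
    have hkey2 : (β : EReal) ≤ (((l * ∫ x, φ x ∂ν + (1 - l) * b : ℝ)) : EReal) := by
      calc (β : EReal) ≤ _ := hkey
        _ ≤ ((l * ∫ x, φ x ∂ν : ℝ) : EReal) + (((1:ℝ) - l : ℝ) : EReal) * (b:EReal) :=
          add_le_add le_rfl hmono
        _ = (((l * ∫ x, φ x ∂ν + (1 - l) * b : ℝ)) : EReal) := by
          rw [← EReal.coe_mul, ← EReal.coe_add]
    have hkeyR : β ≤ l * ∫ x, φ x ∂ν + (1 - l) * b := by exact_mod_cast hkey2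
    have hbβ : b < β := by exact_mod_cast hb2
    have hIβ : ∫ x, φ x ∂ν ≤ β := hub ν hν
    have hl : l = 1 := by nlinarith
    refine ⟨ν, hν, le_antisymm hIβ ?_⟩
    rw [hl] at hkeyR
    linarith
end

section
/- Let (μₙ) be a sequence of probability measures on a locally compact metric space converging vaguely to a sub-probability measure μ with μ(X) > 0, and let φ be bounded above and continuous with ∫ φ dμₙ → β(φ) (the supremum of ∫ φ over the given measure class M, finite). Assume the escape-of-mass inequality limsup ∫ φ dμₙ ≤ ∫ φ dμ + (1 − μ(X)) β_∞(φ) holds and β_∞(φ) ≤ β(φ). Then the normalized measure μ/μ(X) satisfies ∫ φ d(μ/μ(X)) ≥ β(φ); in particular if μ/μ(X) ∈ M it is a maximizing measure. -/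
open MeasureTheory Filter Topology

/-- an optimizing sequence with vague limit `μ` of positive mass yields,
under the escape-of-mass inequality and `β_∞(φ) ≤ β(φ)`, that the normalization of
`μ` has integral at least `β(φ)`; if it belongs to `M` it is maximizing. -/
theorem stmt_7 {X : Type*} [MetricSpace X] [LocallyCompactSpace X]
    [MeasurableSpace X] [BorelSpace X]
    (M : Set (Measure X)) (hMprob : ∀ ν ∈ M, IsProbabilityMeasure ν)
    (φ : X → ℝ) (hφ : Continuous φ) (hbdd : ∃ C, ∀ x, φ x ≤ C)
    (β : ℝ) (hβ : IsLUB {r : ℝ | ∃ ν ∈ M, r = ∫ x, φ x ∂ν} β)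
    (βinf : EReal) (hβinfle : βinf ≤ (β : EReal))
    (μn : ℕ → Measure X) (hμn : ∀ n, μn n ∈ M)
    (μ : Measure X) (hmass0 : μ Set.univ ≠ 0) (hmass1 : μ Set.univ ≤ 1)
    (hvague : ∀ f : X → ℝ, Continuous f → HasCompactSupport f →
      Tendsto (fun n => ∫ x, f x ∂(μn n)) atTop (nhds (∫ x, f x ∂μ)))
    (htend : Tendsto (fun n => ∫ x, φ x ∂(μn n)) atTop (nhds β))
    (hineq : Filter.limsup (fun n => ((∫ x, φ x ∂(μn n) : ℝ) : EReal)) atTop ≤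
      ((∫ x, φ x ∂μ : ℝ) : EReal) +
        (((1:ℝ) - (μ Set.univ).toReal : ℝ) : EReal) * βinf) :
    β ≤ ∫ x, φ x ∂((μ Set.univ)⁻¹ • μ) ∧
      ((μ Set.univ)⁻¹ • μ ∈ M → ∫ x, φ x ∂((μ Set.univ)⁻¹ • μ) = β) := by
  set m : ℝ := (μ Set.univ).toReal with hm
  have hmtop : μ Set.univ ≠ ⊤ := ne_top_of_le_ne_top ENNReal.one_ne_top hmass1
  have hm0 : 0 < m := ENNReal.toReal_pos hmass0 hmtop
  have hm1 : m ≤ 1 := by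
    have := ENNReal.toReal_mono ENNReal.one_ne_top hmass1
    simpa using this
  set I : ℝ := ∫ x, φ x ∂μ with hI
  -- limsup of the sequence is β
  have hls : Filter.limsup (fun n => ((∫ x, φ x ∂(μn n) : ℝ) : EReal)) atTop = (β : EReal) := by
    apply Tendsto.limsup_eq
    exact (EReal.tendsto_coe).2 htend
  have hc : (0 : EReal) ≤ (((1:ℝ) - m : ℝ) : EReal) := by
    rw [EReal.coe_nonneg]; linarith
  have key : (β : EReal) ≤ ((I : ℝ) : EReal) + (((1:ℝ) - m : ℝ) : EReal) * (β : EReal) := by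
    calc (β : EReal) = Filter.limsup (fun n => ((∫ x, φ x ∂(μn n) : ℝ) : EReal)) atTop :=
          hls.symm
      _ ≤ ((I : ℝ) : EReal) + (((1:ℝ) - m : ℝ) : EReal) * βinf := hineq
      _ ≤ ((I : ℝ) : EReal) + (((1:ℝ) - m : ℝ) : EReal) * (β : EReal) := by
          exact add_le_add_right (mul_le_mul_of_nonneg_left hβinfle hc) _
  have keyR : β ≤ I + ((1:ℝ) - m) * β := by
    have : (β : EReal) ≤ ((I + ((1:ℝ) - m) * β : ℝ) : EReal) := by
      rw [EReal.coe_add, EReal.coe_mul]; exact key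
    exact_mod_cast this
  have hmb : m * β ≤ I := by nlinarith
  have hβle : β ≤ m⁻¹ * I := by
    have h1 := mul_le_mul_of_nonneg_left hmb (le_of_lt (inv_pos.2 hm0))
    rwa [← mul_assoc, inv_mul_cancel₀ hm0.ne', one_mul] at h1
  have hint : ∫ x, φ x ∂((μ Set.univ)⁻¹ • μ) = m⁻¹ * I := by
    rw [integral_smul_measure, ENNReal.toReal_inv, smul_eq_mul]
  constructor
  · rw [hint]; exact hβle
  · intro hmem
    refine le_antisymm ?_ (by rw [hint]; exact hβle)
    exact hβ.1 ⟨_, hmem, rfl⟩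
end
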